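/- For every integer d ≥ 1 and every x ∈ ℝ^d, the chain function satisfies prog_0(∇H_d(x)) ≤ prog_{1/2}(x) + 1. -/

import Mathlib

/-- `Ψ(t) = 0` for `t ≤ 1/2` and `Ψ(t) = exp(1 − 1/(2t−1)²)` for `t > 1/2`. -/
noncomputable def Psi (t : ℝ) : ℝ :=
  if t ≤ 1 / 2 then 0 else Real.exp (1 - 1 / (2 * t - 1) ^ 2)

/-- `Φ(t) = √e ∫_{−∞}^{t} exp(−τ²/2) dτ`. -/
noncomputable def Phi (t : ℝ) : ℝ :=
  Real.sqrt (Real.exp 1) * ∫ τ in Set.Iic t, Real.exp (-τ ^ 2 / 2)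

/-- The `i`-th coordinate (1-based, `1 ≤ i ≤ d`) of a vector in `ℝ^d`;
zero when out of range. -/
noncomputable def coord (d : ℕ) (y : EuclideanSpace ℝ (Fin d)) (i : ℕ) : ℝ :=
  if h : i - 1 < d then y ⟨i - 1, h⟩ else 0

/-- The chain function
`H_d(x) = −Ψ(1)Φ(x₁) + ∑_{i=2}^d (Ψ(−x_{i−1})Φ(−x_i) − Ψ(x_{i−1})Φ(x_i))`. -/
noncomputable def Hchain (d : ℕ) (y : EuclideanSpace ℝ (Fin d)) : ℝ :=
  -Psi 1 * Phi (coord d y 1) +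
    ∑ i ∈ Finset.Icc 2 d,
      (Psi (-coord d y (i - 1)) * Phi (-coord d y i) -
        Psi (coord d y (i - 1)) * Phi (coord d y i))

open Classical in
/-- The progress index `prog_a(x) = max({i ∈ {1,…,d} : |x_i| > a} ∪ {0})`. -/
noncomputable def prog (d : ℕ) (a : ℝ) (y : EuclideanSpace ℝ (Fin d)) : ℕ :=
  ((Finset.Icc 1 d).filter fun i => a < |coord d y i|).sup id

/-! ### Auxiliary lemmas -/

open Filter

lemma hasDerivAt_mul_abs (a : ℝ) : HasDerivAt (fun s : ℝ => s * |s|) (2 * |a|) a := by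
  rcases lt_trichotomy a 0 with h | h | h
  · have he : (fun s : ℝ => s * |s|) =ᶠ[nhds a] fun s => -(s^2) := by
      filter_upwards [eventually_lt_nhds h] with s hs
      rw [abs_of_neg hs]; ring
    have H := ((hasDerivAt_pow 2 a).neg).congr_of_eventuallyEq he
    refine H.congr_deriv ?_
    rw [abs_of_neg h]; push_cast; ring
  · subst h
    rw [hasDerivAt_iff_tendsto_slope]
    have hs : slope (fun s : ℝ => s * |s|) 0 =ᶠ[nhdsWithin 0 {(0:ℝ)}ᶜ] fun s => |s| := by
      filter_upwards [self_mem_nhdsWithin] with s hs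
      simp only [Set.mem_compl_iff, Set.mem_singleton_iff] at hs
      simp only [slope, vsub_eq_sub, sub_zero, abs_zero, mul_zero, zero_mul]
      rw [smul_eq_mul, ← mul_assoc, inv_mul_cancel₀ hs, one_mul]
    refine Tendsto.congr' hs.symm ?_
    have : Filter.Tendsto (fun s : ℝ => |s|) (nhds 0) (nhds (2*|0|)) := by
      simpa using continuous_abs.tendsto (0:ℝ)
    exact this.mono_left nhdsWithin_le_nhds
  · have he : (fun s : ℝ => s * |s|) =ᶠ[nhds a] fun s => s^2 := by
      filter_upwards [eventually_gt_nhds h] with s hs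
      rw [abs_of_pos hs]; ring
    have H := (hasDerivAt_pow 2 a).congr_of_eventuallyEq he
    refine H.congr_deriv ?_
    rw [abs_of_pos h]; push_cast; ring

lemma Psi_eq (t : ℝ) :
    Psi t = Real.exp 1 * expNegInvGlue ((2*t-1) * |2*t-1|) := by
  unfold Psi expNegInvGlue
  rcases le_or_gt t (1/2) with h | h
  · have h2 : 2*t - 1 ≤ 0 := by linarith
    rw [if_pos h, if_pos (mul_nonpos_of_nonpos_of_nonneg h2 (abs_nonneg _))]
    simp
  · have h2 : (0:ℝ) < 2*t - 1 := by linarith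
    rw [if_neg (by linarith), if_neg (by positivity : (0:ℝ) < (2*t-1)*|2*t-1|).not_ge]
    rw [abs_of_pos h2, ← Real.exp_add]
    congr 1
    have : (2*t-1) ≠ 0 := ne_of_gt h2
    field_simp
    ring

/-- An everywhere-valid derivative of `Psi`. -/
noncomputable def psiD (a : ℝ) : ℝ :=
  Real.exp 1 * (deriv expNegInvGlue ((2*a-1) * |2*a-1|) * (2 * |2*a-1| * 2))

lemma hasDerivAt_Psi (a : ℝ) : HasDerivAt Psi (psiD a) a := by
  have h1 : HasDerivAt (fun t : ℝ => 2*t - 1) 2 a := by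
    simpa using ((hasDerivAt_id a).const_mul 2).sub_const 1
  have h2 : HasDerivAt (fun s : ℝ => s * |s|) (2 * |2*a-1|) (2*a-1) :=
    hasDerivAt_mul_abs _
  have h3 : HasDerivAt (fun t : ℝ => (2*t-1) * |2*t-1|) (2 * |2*a-1| * 2) a :=
    h2.comp (h := fun t : ℝ => 2*t-1) a h1
  have h4 : HasDerivAt expNegInvGlue (deriv expNegInvGlue ((2*a-1)*|2*a-1|))
      ((2*a-1)*|2*a-1|) :=
    ((expNegInvGlue.contDiff (n := 1)).differentiable one_ne_zero _).hasDerivAt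
  have h5 := (h4.comp a h3).const_mul (Real.exp 1)
  have : Psi = fun t => Real.exp 1 * expNegInvGlue ((2*t-1) * |2*t-1|) :=
    funext Psi_eq
  rw [this]
  exact h5

lemma deriv_glue_nonpos {y : ℝ} (hy : y ≤ 0) : deriv expNegInvGlue y = 0 := by
  rcases lt_or_eq_of_le hy with h | h
  · have : expNegInvGlue =ᶠ[nhds y] fun _ => 0 := by
      filter_upwards [eventually_lt_nhds h] with s hs
      exact expNegInvGlue.zero_of_nonpos hs.le
    rw [this.deriv_eq, deriv_const]
  · subst h
    have H := expNegInvGlue.hasDerivAt_polynomial_eval_inv_mul 1 0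
    simp only [Polynomial.eval_one, one_mul, Polynomial.derivative_one, sub_zero, mul_one,
      Polynomial.eval_mul, Polynomial.eval_pow, Polynomial.eval_X, expNegInvGlue.zero,
      mul_zero] at H
    exact H.deriv

lemma psiD_of_le {a : ℝ} (ha : a ≤ 1/2) : psiD a = 0 := by
  rcases lt_or_eq_of_le ha with h | h
  · have : (2*a-1) * |2*a-1| < 0 := by
      have : 2*a-1 < 0 := by linarith
      exact mul_neg_of_neg_of_pos this (abs_pos.mpr this.ne)
    unfold psiD
    rw [deriv_glue_nonpos this.le]; ring
  · unfold psiD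
    subst h; norm_num

lemma Psi_of_le {a : ℝ} (ha : a ≤ 1/2) : Psi a = 0 := if_pos ha

/-- An everywhere-valid derivative of `Phi`. -/
noncomputable def phiD (t : ℝ) : ℝ := Real.sqrt (Real.exp 1) * Real.exp (-t^2/2)

lemma gauss_integrable : MeasureTheory.Integrable (fun τ : ℝ => Real.exp (-τ^2/2)) := by
  have := integrable_exp_neg_mul_sq (by norm_num : (0:ℝ) < 1/2)
  convert this using 2 with τ
  ring_nf

lemma hasDerivAt_Phi (t : ℝ) : HasDerivAt Phi (phiD t) t := by
  have hc : Continuous (fun τ : ℝ => Real.exp (-τ^2/2)) := by continuity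
  have key : ∀ u : ℝ, (∫ τ in Set.Iic u, Real.exp (-τ^2/2)) =
      (∫ τ in Set.Iic 0, Real.exp (-τ^2/2)) + ∫ τ in (0:ℝ)..u, Real.exp (-τ^2/2) := by
    intro u
    have := intervalIntegral.integral_Iic_sub_Iic (μ := MeasureTheory.volume)
      gauss_integrable.integrableOn gauss_integrable.integrableOn (a := (0:ℝ)) (b := u)
    linarith [this]
  have h1 : HasDerivAt (fun u => ∫ τ in (0:ℝ)..u, Real.exp (-τ^2/2)) (Real.exp (-t^2/2)) t :=
    (hc.integral_hasStrictDerivAt 0 t).hasDerivAt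
  have h2 : HasDerivAt (fun u => (∫ τ in Set.Iic 0, Real.exp (-τ^2/2)) +
      ∫ τ in (0:ℝ)..u, Real.exp (-τ^2/2)) (Real.exp (-t^2/2)) t := h1.const_add _
  have h3 : HasDerivAt (fun u => ∫ τ in Set.Iic u, Real.exp (-τ^2/2)) (Real.exp (-t^2/2)) t := by
    convert h2 using 1
    exact funext key
  exact h3.const_mul (Real.sqrt (Real.exp 1))

/-! ### Coordinate projections as continuous linear maps -/

noncomputable def coordL (d i : ℕ) : EuclideanSpace ℝ (Fin d) →L[ℝ] ℝ :=
  if h : i - 1 < d then EuclideanSpace.proj (⟨i - 1, h⟩ : Fin d) else 0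

lemma hasFDerivAt_coord (d i : ℕ) (x : EuclideanSpace ℝ (Fin d)) :
    HasFDerivAt (fun y => coord d y i) (coordL d i) x := by
  have : (fun y : EuclideanSpace ℝ (Fin d) => coord d y i) = fun y => coordL d i y := by
    funext y
    unfold coord coordL
    split_ifs with h <;> simp
  rw [this]
  exact (coordL d i).hasFDerivAt

lemma coordL_single (d j : ℕ) (k : Fin d) :
    coordL d j (EuclideanSpace.single k 1) = if j - 1 = (k : ℕ) then 1 else 0 := by
  unfold coordL
  split_ifs with h h2 h2
  · simp only [PiLp.proj_apply, EuclideanSpace.single_apply]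
    rw [if_pos]; exact Fin.ext h2
  · simp only [PiLp.proj_apply, EuclideanSpace.single_apply]
    rw [if_neg]; intro hk; exact h2 (congrArg Fin.val hk)
  · exact absurd (h2 ▸ k.isLt) h
  · simp

lemma coord_gradient (d : ℕ) (f : EuclideanSpace ℝ (Fin d) → ℝ) (x : EuclideanSpace ℝ (Fin d))
    (i : ℕ) (h : i - 1 < d) :
    coord d (gradient f x) i = fderiv ℝ f x (EuclideanSpace.single ⟨i - 1, h⟩ 1) := by
  unfold coord
  rw [dif_pos h]
  have h1 : gradient f x ⟨i-1,h⟩ =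
      (inner ℝ (gradient f x) (EuclideanSpace.single (⟨i-1,h⟩ : Fin d) (1:ℝ)) : ℝ) := by
    rw [EuclideanSpace.inner_single_right]
    simp
  rw [h1]
  unfold gradient
  rw [InnerProductSpace.toDual_symm_apply]

/-! ### The derivative of the chain function -/

noncomputable def Lterm (d : ℕ) (x : EuclideanSpace ℝ (Fin d)) (i : ℕ) :
    EuclideanSpace ℝ (Fin d) →L[ℝ] ℝ :=
  (Psi (-coord d x (i-1)) • (phiD (-coord d x i) • -coordL d i) +
    Phi (-coord d x i) • (psiD (-coord d x (i-1)) • -coordL d (i-1))) -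
  (Psi (coord d x (i-1)) • (phiD (coord d x i) • coordL d i) +
    Phi (coord d x i) • (psiD (coord d x (i-1)) • coordL d (i-1)))

noncomputable def Lchain (d : ℕ) (x : EuclideanSpace ℝ (Fin d)) :
    EuclideanSpace ℝ (Fin d) →L[ℝ] ℝ :=
  (-Psi 1) • (phiD (coord d x 1) • coordL d 1) + ∑ i ∈ Finset.Icc 2 d, Lterm d x i

lemma hasFDerivAt_term (d : ℕ) (x : EuclideanSpace ℝ (Fin d)) (i : ℕ) :
    HasFDerivAt
      (fun y => Psi (-coord d y (i-1)) * Phi (-coord d y i) -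
        Psi (coord d y (i-1)) * Phi (coord d y i))
      (Lterm d x i) x := by
  have c1 := hasFDerivAt_coord d (i-1) x
  have c2 := hasFDerivAt_coord d i x
  have p1 := (hasDerivAt_Psi (-coord d x (i-1))).comp_hasFDerivAt x c1.neg
  have q1 := (hasDerivAt_Phi (-coord d x i)).comp_hasFDerivAt x c2.neg
  have p2 := (hasDerivAt_Psi (coord d x (i-1))).comp_hasFDerivAt x c1
  have q2 := (hasDerivAt_Phi (coord d x i)).comp_hasFDerivAt x c2
  exact (p1.mul q1).sub (p2.mul q2)

lemma hasFDerivAt_Hchain (d : ℕ) (x : EuclideanSpace ℝ (Fin d)) :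
    HasFDerivAt (Hchain d) (Lchain d x) x := by
  have hfirst : HasFDerivAt (fun y => -Psi 1 * Phi (coord d y 1))
      ((-Psi 1) • (phiD (coord d x 1) • coordL d 1)) x :=
    ((hasDerivAt_Phi (coord d x 1)).comp_hasFDerivAt x
      (hasFDerivAt_coord d 1 x)).const_mul (-Psi 1)
  have hsum : HasFDerivAt
      (fun y => ∑ i ∈ Finset.Icc 2 d,
        (Psi (-coord d y (i-1)) * Phi (-coord d y i) -
          Psi (coord d y (i-1)) * Phi (coord d y i)))
      (∑ i ∈ Finset.Icc 2 d, Lterm d x i) x :=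
    HasFDerivAt.fun_sum (fun i _ => hasFDerivAt_term d x i)
  exact hfirst.add hsum

/-! ### Main theorem -/

/-- Zero-chain property: `prog_0(∇H_d(x)) ≤ prog_{1/2}(x) + 1`. -/
theorem chain_progress_bound (d : ℕ) (hd : 1 ≤ d)
    (x : EuclideanSpace ℝ (Fin d)) :
    prog d 0 (gradient (Hchain d) x) ≤ prog d (1 / 2) x + 1 := by
  set p := prog d (1/2) x with hp
  have small : ∀ j, 1 ≤ j → p < j → |coord d x j| ≤ 1/2 := by
    intro j hj1 hjp
    by_contra hc
    push_neg at hc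
    rcases le_or_gt j d with hjd | hjd
    · have hle : j ≤ p := by
        rw [hp]
        unfold prog
        exact Finset.le_sup (f := id)
          (Finset.mem_filter.mpr ⟨Finset.mem_Icc.mpr ⟨hj1, hjd⟩, hc⟩)
      omega
    · have hz : coord d x j = 0 := by
        unfold coord; rw [dif_neg]; omega
      rw [hz] at hc; simp at hc; linarith
  unfold prog
  apply Finset.sup_le
  intro b hb
  simp only [id_eq]
  rw [Finset.mem_filter, Finset.mem_Icc] at hb
  obtain ⟨⟨hb1, hbd⟩, habs⟩ := hb
  by_contra hgt
  push_neg at hgt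
  -- now p + 1 < b ; show the b-th gradient coordinate vanishes
  have hblt : b - 1 < d := by omega
  have hfd : fderiv ℝ (Hchain d) x = Lchain d x := (hasFDerivAt_Hchain d x).fderiv
  have hcoord := coord_gradient d (Hchain d) x b hblt
  rw [hfd] at hcoord
  set k : Fin d := ⟨b - 1, hblt⟩ with hk
  have hkv : (k : ℕ) = b - 1 := rfl
  have hzero : Lchain d x (EuclideanSpace.single k 1) = 0 := by
    unfold Lchain
    rw [ContinuousLinearMap.add_apply, ContinuousLinearMap.sum_apply]
    have hfirst : ((-Psi 1) • (phiD (coord d x 1) • coordL d 1))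
        (EuclideanSpace.single k 1) = 0 := by
      rw [ContinuousLinearMap.smul_apply, ContinuousLinearMap.smul_apply, coordL_single]
      rw [if_neg (by omega)]
      simp
    have hterm : ∀ j ∈ Finset.Icc 2 d, Lterm d x j (EuclideanSpace.single k 1) = 0 := by
      intro j hj
      rw [Finset.mem_Icc] at hj
      unfold Lterm
      simp only [ContinuousLinearMap.sub_apply, ContinuousLinearMap.add_apply,
        ContinuousLinearMap.smul_apply, ContinuousLinearMap.neg_apply, coordL_single,
        smul_eq_mul, hkv]
      by_cases h1 : j - 1 = b - 1
      · have hjb : j = b := by omega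
        have h2 : ¬ (j - 1 - 1 = b - 1) := by omega
        rw [if_pos h1, if_neg h2]
        have hs : |coord d x (j-1)| ≤ 1/2 := small (j-1) (by omega) (by omega)
        rw [abs_le] at hs
        rw [Psi_of_le (by linarith [hs.1, hs.2] : -coord d x (j-1) ≤ 1/2),
          Psi_of_le (hs.2)]
        ring
      · by_cases h2 : j - 1 - 1 = b - 1
        · rw [if_neg h1, if_pos h2]
          have hjb : j = b + 1 := by omega
          have hs : |coord d x (j-1)| ≤ 1/2 := small (j-1) (by omega) (by omega)
          rw [abs_le] at hs
          rw [psiD_of_le (by linarith [hs.1, hs.2] : -coord d x (j-1) ≤ 1/2),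
            psiD_of_le (hs.2)]
          ring
        · rw [if_neg h1, if_neg h2]
          ring
    rw [hfirst, Finset.sum_eq_zero hterm, add_zero]
  rw [hzero] at hcoord
  rw [hcoord] at habs
  simp at habs
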